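/- Let (Ω, ℱ, μ) be a probability space, E a measurable space, and (X_1, Y_1), …, (X_n, Y_n) i.i.d. pairs with X_i : Ω → E measurable and Y_i : Ω → ℝ taking only the values 0 and 1. Let g, w, g' : E → ℝ be bounded measurable functions such that g ∘ X_1 is a version of E[Y_1 | σ(X_1)], let q = E[g(X_1)], and let 1 ≤ r ≤ n. Then Cov( Σ_{i=1}^n (g(X_i) − q), Σ_{i=1}^r w(X_i) (Y_i − g(X_i)) g'(X_i) ) = 0. -/

import Mathlib

open MeasureTheory ProbabilityTheory

/-- The terms `G_n` and `H_r` in the proof of the paper's asymptotic variance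
theorem are uncorrelated: for i.i.d. pairs `(X_i, Y_i)` with binary `Y_i`,
`g ∘ X_1` a version of `E[Y_1 | σ(X_1)]`, and `q = E[g(X_1)]`,
`Cov(Σ_{i≤n} (g(X_i) - q), Σ_{i≤r} w(X_i)(Y_i - g(X_i)) g'(X_i)) = 0`. -/
theorem Gn_Hr_uncorrelated
    {Ω : Type*} {E : Type*} [MeasurableSpace Ω] [MeasurableSpace E]
    (μ : Measure Ω) [IsProbabilityMeasure μ]
    (n : ℕ) (hn : 0 < n)
    (X : Fin n → Ω → E) (Y : Fin n → Ω → ℝ)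
    (hpairmeas : ∀ i, Measurable (fun ω => (X i ω, Y i ω)))
    (hindep : iIndepFun (fun i ω => (X i ω, Y i ω)) μ)
    (hident : ∀ i, IdentDistrib (fun ω => (X i ω, Y i ω))
        (fun ω => (X ⟨0, hn⟩ ω, Y ⟨0, hn⟩ ω)) μ μ)
    (hYbin : ∀ i ω, Y i ω = 0 ∨ Y i ω = 1)
    (g w g' : E → ℝ)
    (hg : Measurable g) (hw : Measurable w) (hg' : Measurable g')
    (Cg Cw Cg' : ℝ)
    (hgb : ∀ t, |g t| ≤ Cg) (hwb : ∀ t, |w t| ≤ Cw) (hg'b : ∀ t, |g' t| ≤ Cg')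
    (hcond : (fun ω => g (X ⟨0, hn⟩ ω)) =ᵐ[μ]
        μ[Y ⟨0, hn⟩ | MeasurableSpace.comap (X ⟨0, hn⟩) inferInstance])
    (q : ℝ) (hq : q = ∫ ω, g (X ⟨0, hn⟩ ω) ∂μ)
    (r : ℕ) (hr : 1 ≤ r) (hrn : r ≤ n)
    (G H : Ω → ℝ)
    (hG : G = fun ω => ∑ i : Fin n, (g (X i ω) - q))
    (hH : H = fun ω => ∑ i ∈ Finset.univ.filter (fun i : Fin n => (i : ℕ) < r),
        w (X i ω) * (Y i ω - g (X i ω)) * g' (X i ω)) :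
    ∫ ω, (G ω - ∫ ω', G ω' ∂μ) * (H ω - ∫ ω', H ω' ∂μ) ∂μ = 0 := by
  classical
  set x0 : Fin n := ⟨0, hn⟩ with hx0
  have hX : ∀ i, Measurable (X i) := fun i => measurable_fst.comp (hpairmeas i)
  have hY : ∀ i, Measurable (Y i) := fun i => measurable_snd.comp (hpairmeas i)
  have hYb : ∀ i ω, |Y i ω| ≤ 1 := by
    intro i ω; rcases hYbin i ω with h | h <;> simp [h]
  -- integrability of bounded measurable functions
  have intb : ∀ (f : Ω → ℝ) (C : ℝ), Measurable f → (∀ ω, |f ω| ≤ C) →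
      Integrable f μ := by
    intro f C hf hb
    exact (integrable_const C).mono' hf.aestronglyMeasurable
      (Filter.Eventually.of_forall (by simpa [Real.norm_eq_abs] using hb))
  -- key lemma for index 0 : E[f(X₀)(Y₀ - g(X₀))] = 0
  have keyA : ∀ (f : E → ℝ) (C : ℝ), Measurable f → (∀ t, |f t| ≤ C) →
      ∫ ω, f (X x0 ω) * (Y x0 ω - g (X x0 ω)) ∂μ = 0 := by
    intro f C hf hb
    set m := MeasurableSpace.comap (X x0) inferInstance with hm_def
    have hm := (hX x0).comap_le
    haveI : SigmaFinite (μ.trim hm) := inferInstance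
    have hfm : StronglyMeasurable[m] (fun ω => f (X x0 ω)) :=
      (hf.comp (Measurable.of_comap_le le_rfl)).stronglyMeasurable
    have hYint : Integrable (Y x0) μ := intb _ 1 (hY x0) (hYb x0)
    have hfY : Integrable (fun ω => f (X x0 ω) * Y x0 ω) μ := by
      refine intb _ (|C| * 1) ((hf.comp (hX x0)).mul (hY x0)) ?_
      intro ω; rw [abs_mul]
      exact mul_le_mul ((hb _).trans (le_abs_self _)) (hYb x0 ω) (abs_nonneg _)
        (abs_nonneg _)
    have hfg : Integrable (fun ω => f (X x0 ω) * g (X x0 ω)) μ := by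
      refine intb _ (|C| * |Cg|) ((hf.comp (hX x0)).mul (hg.comp (hX x0))) ?_
      intro ω; rw [abs_mul]
      exact mul_le_mul ((hb _).trans (le_abs_self _))
        ((hgb _).trans (le_abs_self _)) (abs_nonneg _) (abs_nonneg _)
    have hce : μ[(fun ω => f (X x0 ω)) * Y x0 | m]
        =ᵐ[μ] (fun ω => f (X x0 ω)) * μ[Y x0 | m] :=
      condExp_mul_of_stronglyMeasurable_left hfm hfY hYint
    have h1 : ∫ ω, f (X x0 ω) * Y x0 ω ∂μ = ∫ ω, f (X x0 ω) * g (X x0 ω) ∂μ :=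
      calc ∫ ω, f (X x0 ω) * Y x0 ω ∂μ
          = ∫ ω, ((fun ω => f (X x0 ω)) * Y x0) ω ∂μ := rfl
        _ = ∫ ω, (μ[(fun ω => f (X x0 ω)) * Y x0 | m]) ω ∂μ :=
            (integral_condExp hm).symm
        _ = ∫ ω, f (X x0 ω) * g (X x0 ω) ∂μ := by
            refine integral_congr_ae ?_
            filter_upwards [hce, hcond] with ω h₁ h₂
            rw [h₁]
            simp only [Pi.mul_apply]
            rw [← h₂]
    simp_rw [mul_sub]
    rw [integral_sub hfY hfg, h1, sub_self]
  -- transfer to any index i by identical distribution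
  have keyB : ∀ (i : Fin n) (f : E → ℝ) (C : ℝ), Measurable f → (∀ t, |f t| ≤ C) →
      ∫ ω, f (X i ω) * (Y i ω - g (X i ω)) ∂μ = 0 := by
    intro i f C hf hb
    have hφ : Measurable (fun p : E × ℝ => f p.1 * (p.2 - g p.1)) :=
      (hf.comp measurable_fst).mul (measurable_snd.sub (hg.comp measurable_fst))
    have h := ((hident i).comp hφ).integral_eq
    simpa [Function.comp] using h.trans (keyA f C hf hb)
  -- each g(X i) has mean q
  have hEg : ∀ i : Fin n, ∫ ω, g (X i ω) ∂μ = q := by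
    intro i
    have h := ((hident i).comp (hg.comp measurable_fst)).integral_eq
    simp only [Function.comp] at h
    rw [hq]; exact h
  -- notation for the summands
  set a : Fin n → Ω → ℝ := fun i ω => g (X i ω) - q with ha
  set b : Fin n → Ω → ℝ := fun i ω =>
    w (X i ω) * (Y i ω - g (X i ω)) * g' (X i ω) with hb
  have hameas : ∀ i, Measurable (a i) := fun i => (hg.comp (hX i)).sub measurable_const
  have hbmeas : ∀ i, Measurable (b i) := fun i =>
    ((hw.comp (hX i)).mul ((hY i).sub (hg.comp (hX i)))).mul (hg'.comp (hX i))
  have habd : ∀ i ω, |a i ω| ≤ Cg + |q| := by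
    intro i ω
    exact (abs_sub _ _).trans (add_le_add (hgb _) le_rfl)
  have hbbd : ∀ i ω, |b i ω| ≤ Cw * (1 + Cg) * Cg' := by
    intro i ω
    have h0w : (0:ℝ) ≤ Cw := (abs_nonneg _).trans (hwb (X i ω))
    have h0g : (0:ℝ) ≤ Cg := (abs_nonneg _).trans (hgb (X i ω))
    have h2 : |Y i ω - g (X i ω)| ≤ 1 + Cg :=
      (abs_sub _ _).trans (add_le_add (hYb i ω) (hgb _))
    rw [abs_mul, abs_mul]
    exact mul_le_mul (mul_le_mul (hwb _) h2 (abs_nonneg _) h0w) (hg'b _)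
      (abs_nonneg _) (by positivity)
  have hainte : ∀ i, Integrable (a i) μ := fun i => intb _ _ (hameas i) (habd i)
  have hbinte : ∀ i, Integrable (b i) μ := fun i => intb _ _ (hbmeas i) (hbbd i)
  -- means are zero
  have hEa : ∀ i, ∫ ω, a i ω ∂μ = 0 := by
    intro i
    have h1 : Integrable (fun ω => g (X i ω)) μ :=
      intb _ Cg (hg.comp (hX i)) fun ω => hgb _
    have h2 : ∫ ω, a i ω ∂μ = (∫ ω, g (X i ω) ∂μ) - ∫ _ω, q ∂μ := by
      simp only [ha]
      exact integral_sub h1 (integrable_const q)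
    rw [h2, hEg i, integral_const]
    simp
  have hEb : ∀ i, ∫ ω, b i ω ∂μ = 0 := by
    intro i
    have h : ∀ ω, b i ω = (fun t => w t * g' t) (X i ω) * (Y i ω - g (X i ω)) := by
      intro ω; simp only [hb]; ring
    rw [show (fun ω => b i ω) = fun ω =>
        (fun t => w t * g' t) (X i ω) * (Y i ω - g (X i ω)) from funext h]
    refine keyB i _ (|Cw| * |Cg'|) (hw.mul hg') ?_
    intro t; rw [Pi.mul_apply, abs_mul]
    exact mul_le_mul ((hwb _).trans (le_abs_self _)) ((hg'b _).trans (le_abs_self _))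
      (abs_nonneg _) (abs_nonneg _)
  -- expectation of each product a i * b j is zero
  have hEab : ∀ i j : Fin n, ∫ ω, a i ω * b j ω ∂μ = 0 := by
    intro i j
    by_cases hij : i = j
    · subst hij
      have h : ∀ ω, a i ω * b i ω
          = (fun t => (g t - q) * w t * g' t) (X i ω) * (Y i ω - g (X i ω)) := by
        intro ω; simp only [ha, hb]; ring
      rw [integral_congr_ae (Filter.Eventually.of_forall h)]
      refine keyB i _ ((|Cg| + |q|) * |Cw| * |Cg'|)
        (((hg.sub measurable_const).mul hw).mul hg') ?_
      intro t
      simp only [Pi.mul_apply, Pi.sub_apply]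
      rw [abs_mul, abs_mul]
      refine mul_le_mul (mul_le_mul ?_ ((hwb _).trans (le_abs_self _)) (abs_nonneg _)
        (by positivity)) ((hg'b _).trans (le_abs_self _)) (abs_nonneg _) (by positivity)
      exact (abs_sub _ _).trans (add_le_add ((hgb _).trans (le_abs_self _)) le_rfl)
    · have hind : IndepFun (fun ω => (X i ω, Y i ω)) (fun ω => (X j ω, Y j ω)) μ :=
        hindep.indepFun hij
      have hφ : Measurable (fun p : E × ℝ => g p.1 - q) :=
        (hg.comp measurable_fst).sub measurable_const
      have hψ : Measurable (fun p : E × ℝ => w p.1 * (p.2 - g p.1) * g' p.1) :=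
        ((hw.comp measurable_fst).mul
          (measurable_snd.sub (hg.comp measurable_fst))).mul (hg'.comp measurable_fst)
      have h := (hind.comp hφ hψ).integral_mul_eq_mul_integral (hainte i).aestronglyMeasurable (hbinte j).aestronglyMeasurable
      have h2 : ∫ ω, a i ω * b j ω ∂μ = (∫ ω, a i ω ∂μ) * ∫ ω, b j ω ∂μ := h
      rw [h2, hEb j, mul_zero]
  -- compute the means of G and H
  have hEG : ∫ ω, G ω ∂μ = 0 := by
    rw [hG, integral_finset_sum _ (fun i _ => hainte i)]
    simp only [hEa, Finset.sum_const_zero]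
  have hEH : ∫ ω, H ω ∂μ = 0 := by
    rw [hH, integral_finset_sum _ (fun i _ => hbinte i)]
    simp only [hEb, Finset.sum_const_zero]
  rw [hEG, hEH]
  simp only [sub_zero]
  -- expand the product of sums
  have hexp : ∀ ω, G ω * H ω = ∑ i : Fin n,
      ∑ j ∈ Finset.univ.filter (fun j : Fin n => (j : ℕ) < r), a i ω * b j ω := by
    intro ω
    rw [hG, hH, Finset.sum_mul_sum]
  rw [integral_congr_ae (Filter.Eventually.of_forall hexp)]
  rw [integral_finset_sum _ (fun i _ => integrable_finset_sum _ (fun j _ =>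
    intb (fun ω => a i ω * b j ω) ((Cg + |q|) * (Cw * (1 + Cg) * Cg')) ((hameas i).mul (hbmeas j)) (by
      intro ω; rw [abs_mul]
      exact mul_le_mul (habd i ω) (hbbd j ω) (abs_nonneg _)
        ((abs_nonneg _).trans (habd i ω)))))]
  refine Finset.sum_eq_zero fun i _ => ?_
  rw [integral_finset_sum _ (fun j _ =>
    intb (fun ω => a i ω * b j ω) ((Cg + |q|) * (Cw * (1 + Cg) * Cg')) ((hameas i).mul (hbmeas j)) (by
      intro ω; rw [abs_mul]
      exact mul_le_mul (habd i ω) (hbbd j ω) (abs_nonneg _)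
        ((abs_nonneg _).trans (habd i ω))))]
  exact Finset.sum_eq_zero fun j _ => hEab i j
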